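/- Identify G = (ℤ/2ℤ)³ ≅ {0,1}³ and for a, b, c ∈ G let [a,b,c] ∈ ℤ/2ℤ denote the determinant of the 3×3 matrix over ℤ/2ℤ with rows a, b, c (equivalently a·(b×c) computed mod 2). Define φ(a,b,c) := (−1)^{[a,b,c]} ∈ {±1} ⊂ ℂ (using the lift of [a,b,c] to {0,1}). Then φ satisfies the pentagonal cocycle identity on the group G: φ(a,b,c) · φ(a, b+c, d) · φ(b,c,d) = φ(a+b, c, d) · φ(a, b, c+d) for all a,b,c,d ∈ G. (This is the three-cocycle used to construct the octonions from ℝ.) -/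

import Mathlib

/-- `[a,b,c]` : the determinant over `ℤ/2ℤ` of the `3×3` matrix with rows
`a, b, c ∈ (ℤ/2ℤ)³` (equivalently `a·(b×c)` mod 2). -/
def octTripleDet (a b c : Fin 3 → ZMod 2) : ZMod 2 :=
  Matrix.det (Matrix.of ![a, b, c])

/-- The octonion associator cocycle `φ(a,b,c) = (−1)^{[a,b,c]} ∈ {±1} ⊂ ℂ`, using the lift
of `[a,b,c]` to `{0,1}`. -/
noncomputable def octPhi (a b c : Fin 3 → ZMod 2) : ℂ :=
  (-1 : ℂ) ^ (octTripleDet a b c).val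

lemma neg_one_pow_add_val (x y : ZMod 2) :
    (-1 : ℂ) ^ (x + y).val = (-1 : ℂ) ^ x.val * (-1 : ℂ) ^ y.val := by
  rw [show (x + y).val = (x.val + y.val) % 2 by revert x y; decide, ← pow_add, ← neg_one_pow_eq_pow_mod_two]

lemma octTripleDet_expand (a b c : Fin 3 → ZMod 2) :
    octTripleDet a b c =
      a 0 * b 1 * c 2 - a 0 * b 2 * c 1 - a 1 * b 0 * c 2
        + a 1 * b 2 * c 0 + a 2 * b 0 * c 1 - a 2 * b 1 * c 0 := by
  simp [octTripleDet, Matrix.det_fin_three]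

lemma det_add_mid (a b c d : Fin 3 → ZMod 2) :
    octTripleDet a (b + c) d = octTripleDet a b d + octTripleDet a c d := by
  simp only [octTripleDet_expand, Pi.add_apply]; ring

lemma det_add_left (a b c d : Fin 3 → ZMod 2) :
    octTripleDet (a + b) c d = octTripleDet a c d + octTripleDet b c d := by
  simp only [octTripleDet_expand, Pi.add_apply]; ring

lemma det_add_right (a b c d : Fin 3 → ZMod 2) :
    octTripleDet a b (c + d) = octTripleDet a b c + octTripleDet a b d := by
  simp only [octTripleDet_expand, Pi.add_apply]; ring

/-- The three-cocycle used to construct the octonions from `ℝ`: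
`φ(a,b,c) = (−1)^{[a,b,c]}` on `G = (ℤ/2ℤ)³` satisfies the pentagonal cocycle identity
`φ(a,b,c) φ(a,b+c,d) φ(b,c,d) = φ(a+b,c,d) φ(a,b,c+d)`. -/
theorem octonion_cocycle_pentagonal :
    ∀ a b c d : Fin 3 → ZMod 2,
      octPhi a b c * octPhi a (b + c) d * octPhi b c d
        = octPhi (a + b) c d * octPhi a b (c + d) := by
  intro a b c d
  simp only [octPhi, det_add_mid, det_add_left, det_add_right, neg_one_pow_add_val]
  ring
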